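/- arXiv:0911.2494 — 6 statements merged into one kernel-verified Lean document; each statement's English description precedes it below -/
import Mathlib

section
/- For nonempty A₁, A₂ ⊆ ℕ with minima 𝔪₁, 𝔪₂ and with 𝔪₁ ≤ 𝔪₂, setting 𝔮ᵢ := gcd(Aᵢ − 𝔪ᵢ), the set A₁ ∪ A₂ has gcd(A₁ ∪ A₂ − min(A₁ ∪ A₂)) = gcd(𝔮₁, 𝔮₂, 𝔪₂ − 𝔪₁). -/
/-- The gcd of a set of naturals: the greatest common divisor
(`0` if the set has no positive common-divisor bound, e.g. `S ⊆ {0}` or `S = ∅`). -/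
noncomputable def setGcd (S : Set ℕ) : ℕ := sSup {d : ℕ | ∀ a ∈ S, d ∣ a}

lemma setGcd_dvd {S : Set ℕ} {a : ℕ} (ha : a ∈ S) : setGcd S ∣ a := by
  unfold setGcd
  by_cases h : ∀ b ∈ S, b = 0
  · have : a = 0 := h a ha
    simp [this]
  · push_neg at h
    obtain ⟨b, hb, hb0⟩ := h
    have hbdd : BddAbove {d : ℕ | ∀ a ∈ S, d ∣ a} :=
      ⟨b, fun d hd => Nat.le_of_dvd (Nat.pos_of_ne_zero hb0) (hd b hb)⟩
    have hne : {d : ℕ | ∀ a ∈ S, d ∣ a}.Nonempty := ⟨1, fun a _ => one_dvd a⟩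
    exact Nat.sSup_mem hne hbdd a ha

lemma dvd_setGcd {S : Set ℕ} {d : ℕ} (hd : ∀ a ∈ S, d ∣ a) : d ∣ setGcd S := by
  by_cases h : ∀ b ∈ S, b = 0
  · have hset : {e : ℕ | ∀ a ∈ S, e ∣ a} = Set.univ := by
      ext e
      simp only [Set.mem_setOf_eq, Set.mem_univ, iff_true]
      intro a ha
      rw [h a ha]
      exact dvd_zero e
    have : setGcd S = 0 := by
      unfold setGcd
      rw [hset, csSup_of_not_bddAbove, csSup_empty]
      · rfl
      · intro ⟨ub, hub⟩
        exact absurd (hub (Set.mem_univ (ub + 1))) (by omega)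
    simp [this]
  · push_neg at h
    obtain ⟨b, hb, hb0⟩ := h
    have hbdd : BddAbove {e : ℕ | ∀ a ∈ S, e ∣ a} :=
      ⟨b, fun e he => Nat.le_of_dvd (Nat.pos_of_ne_zero hb0) (he b hb)⟩
    have hne : {e : ℕ | ∀ a ∈ S, e ∣ a}.Nonempty := ⟨1, fun a _ => one_dvd a⟩
    have hgmem : setGcd S ∈ {e : ℕ | ∀ a ∈ S, e ∣ a} := Nat.sSup_mem hne hbdd
    have hg0 : setGcd S ≠ 0 := by
      intro h0
      have := hgmem b hb
      rw [h0] at this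
      exact hb0 (Nat.eq_zero_of_zero_dvd this)
    have hd0 : d ≠ 0 := by
      intro h0
      have := hd b hb
      rw [h0] at this
      exact hb0 (Nat.eq_zero_of_zero_dvd this)
    have hlcm_mem : Nat.lcm d (setGcd S) ∈ {e : ℕ | ∀ a ∈ S, e ∣ a} :=
      fun a ha => Nat.lcm_dvd (hd a ha) (hgmem a ha)
    have h1 : Nat.lcm d (setGcd S) ≤ setGcd S := le_csSup hbdd hlcm_mem
    have h2 : setGcd S ≤ Nat.lcm d (setGcd S) :=
      Nat.le_of_dvd (Nat.pos_of_ne_zero (Nat.lcm_ne_zero hd0 hg0))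
        (Nat.dvd_lcm_right _ _)
    have : Nat.lcm d (setGcd S) = setGcd S := le_antisymm h1 h2
    calc d ∣ Nat.lcm d (setGcd S) := Nat.dvd_lcm_left _ _
      _ = setGcd S := this

theorem gcd_param_union (A₁ A₂ : Set ℕ) (h₁ : A₁.Nonempty) (h₂ : A₂.Nonempty)
    (hm : sInf A₁ ≤ sInf A₂) :
    setGcd ((fun a => a - sInf (A₁ ∪ A₂)) '' (A₁ ∪ A₂)) =
      Nat.gcd (setGcd ((fun a => a - sInf A₁) '' A₁))
        (Nat.gcd (setGcd ((fun a => a - sInf A₂) '' A₂)) (sInf A₂ - sInf A₁)) := by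
  have hm₁mem : sInf A₁ ∈ A₁ := Nat.sInf_mem h₁
  have hm₂mem : sInf A₂ ∈ A₂ := Nat.sInf_mem h₂
  have hU : sInf (A₁ ∪ A₂) = sInf A₁ := by
    apply le_antisymm
    · exact Nat.sInf_le (Or.inl hm₁mem)
    · rcases Nat.sInf_mem (h₁.mono Set.subset_union_left) with h | h
      · exact Nat.sInf_le h
      · exact le_trans hm (Nat.sInf_le h)
  rw [hU]
  apply Nat.dvd_antisymm
  · apply Nat.dvd_gcd
    · apply dvd_setGcd
      rintro x ⟨a, ha, rfl⟩
      exact setGcd_dvd ⟨a, Or.inl ha, rfl⟩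
    · apply Nat.dvd_gcd
      · apply dvd_setGcd
        rintro x ⟨a, ha, rfl⟩
        have h1 : setGcd ((fun a => a - sInf A₁) '' (A₁ ∪ A₂)) ∣ a - sInf A₁ :=
          setGcd_dvd ⟨a, Or.inr ha, rfl⟩
        have h2 : setGcd ((fun a => a - sInf A₁) '' (A₁ ∪ A₂)) ∣ sInf A₂ - sInf A₁ :=
          setGcd_dvd ⟨sInf A₂, Or.inr hm₂mem, rfl⟩
        have h3 := Nat.dvd_sub h1 h2
        have hle : sInf A₂ ≤ a := Nat.sInf_le ha
        have heq : a - sInf A₁ - (sInf A₂ - sInf A₁) = a - sInf A₂ := by omega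
        rwa [heq] at h3
      · exact setGcd_dvd ⟨sInf A₂, Or.inr hm₂mem, rfl⟩
  · apply dvd_setGcd
    rintro x ⟨a, ha, rfl⟩
    rcases ha with h | h
    · exact (Nat.gcd_dvd_left _ _).trans (setGcd_dvd ⟨a, h, rfl⟩)
    · have hq2 : Nat.gcd (setGcd ((fun a => a - sInf A₁) '' A₁))
          (Nat.gcd (setGcd ((fun a => a - sInf A₂) '' A₂)) (sInf A₂ - sInf A₁)) ∣ a - sInf A₂ :=
        ((Nat.gcd_dvd_right _ _).trans (Nat.gcd_dvd_left _ _)).trans (setGcd_dvd ⟨a, h, rfl⟩)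
      have hdm : Nat.gcd (setGcd ((fun a => a - sInf A₁) '' A₁))
          (Nat.gcd (setGcd ((fun a => a - sInf A₂) '' A₂)) (sInf A₂ - sInf A₁)) ∣
            sInf A₂ - sInf A₁ :=
        (Nat.gcd_dvd_right _ _).trans (Nat.gcd_dvd_right _ _)
      have hsum := Nat.dvd_add hq2 hdm
      have hle : sInf A₂ ≤ a := Nat.sInf_le h
      have heq : a - sInf A₂ + (sInf A₂ - sInf A₁) = a - sInf A₁ := by omega
      rwa [heq] at hsum
end

section
/- If A ⊆ ℕ is infinite and eventually periodic, then 𝔮 divides 𝔭, where 𝔪 = min A, 𝔮 = gcd(A − 𝔪), and 𝔭 is the minimal eventual period; moreover 𝔭 = 𝔮 if and only if 𝔭 divides a − 𝔪 for every a ∈ A. -/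
/-- `p` is an eventual period of `A`. -/
def EvPeriodOf (A : Set ℕ) (p : ℕ) : Prop := ∃ m : ℕ, ∀ a ∈ A, m ≤ a → a + p ∈ A

theorem q_dvd_p (A : Set ℕ) (𝔭 : ℕ)
    (hinf : A.Infinite)
    (hleast : IsLeast {p : ℕ | 0 < p ∧ EvPeriodOf A p} 𝔭) :
    setGcd ((fun a => a - sInf A) '' A) ∣ 𝔭 ∧
    (𝔭 = setGcd ((fun a => a - sInf A) '' A) ↔ ∀ a ∈ A, 𝔭 ∣ a - sInf A) := by
  obtain ⟨hp_pos, M, hM⟩ := hleast.1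
  set m := sInf A with hm
  set S := (fun a => a - m) '' A with hS
  set D := {d : ℕ | ∀ a ∈ S, d ∣ a} with hD
  have hsg : setGcd S = sSup D := rfl
  obtain ⟨a₀, ha₀⟩ := (hinf.diff (Set.finite_singleton m)).nonempty
  have ha₀A : a₀ ∈ A := ha₀.1
  have hlt : 0 < a₀ - m := by
    have h1 : m ≤ a₀ := Nat.sInf_le ha₀A
    have h2 : a₀ ≠ m := by simpa using ha₀.2
    omega
  have hbdd : BddAbove D := by
    refine ⟨a₀ - m, fun d hd => ?_⟩
    exact Nat.le_of_dvd hlt (hd _ ⟨a₀, ha₀A, rfl⟩)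
  have hne : (1:ℕ) ∈ D := fun a _ => one_dvd a
  have hqD : setGcd S ∈ D := by rw [hsg]; exact Nat.sSup_mem ⟨1, hne⟩ hbdd
  obtain ⟨b, hb⟩ := (hinf.diff (Set.finite_Iio M)).nonempty
  have hbA : b ∈ A := hb.1
  have hbM : M ≤ b := by simpa using hb.2
  have hb' : b + 𝔭 ∈ A := hM b hbA hbM
  have h1 : setGcd S ∣ b - m := hqD _ ⟨b, hbA, rfl⟩
  have h2 : setGcd S ∣ b + 𝔭 - m := hqD _ ⟨b + 𝔭, hb', rfl⟩
  have hmb : m ≤ b := Nat.sInf_le hbA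
  have hqp : setGcd S ∣ 𝔭 := by
    have heq : b + 𝔭 - m = (b - m) + 𝔭 := by omega
    rw [heq] at h2
    exact (Nat.dvd_add_right h1).mp h2
  refine ⟨hqp, ⟨fun h a ha => ?_, fun h => ?_⟩⟩
  · rw [h]; exact hqD _ ⟨a, ha, rfl⟩
  · have hPD : 𝔭 ∈ D := by rintro x ⟨a, haA, rfl⟩; exact h a haA
    have h3 : 𝔭 ≤ setGcd S := by rw [hsg]; exact le_csSup hbdd hPD
    have h4 : setGcd S ≤ 𝔭 := Nat.le_of_dvd hp_pos hqp
    omega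
end

section
/- Let A ⊆ ℕ be periodic with minimal eventual period 𝔭 > 0. If the image of A in ℤ/𝔭ℤ is a subgroup of ℤ/𝔭ℤ, then 𝔭 = gcd(A − min A), and for all sufficiently large m, A ∩ [𝔭m, ∞) = 𝔭m + 𝔭·ℕ. -/
theorem subgroup_image_case (A : Set ℕ) (𝔭 : ℕ)
    (hper : ∃ p > 0, ∀ a ∈ A, a + p ∈ A)
    (hpos : 0 < 𝔭)
    (hleast : IsLeast {p : ℕ | 0 < p ∧ EvPeriodOf A p} 𝔭)
    (hsub : ∃ H : AddSubgroup (ZMod 𝔭), (fun n : ℕ => (n : ZMod 𝔭)) '' A = ↑H) :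
    𝔭 = setGcd ((fun a => a - sInf A) '' A) ∧
    ∃ M : ℕ, ∀ m : ℕ, M ≤ m →
      {a ∈ A | 𝔭 * m ≤ a} = {x : ℕ | ∃ n : ℕ, x = 𝔭 * m + 𝔭 * n} := by
  obtain ⟨p, hp, hpA⟩ := hper
  obtain ⟨H, hH⟩ := hsub
  obtain ⟨m₀, hm₀⟩ := hleast.1.2
  haveI : NeZero 𝔭 := ⟨hpos.ne'⟩
  have hmem_iff : ∀ x : ZMod 𝔭, (∃ a ∈ A, (a : ZMod 𝔭) = x) ↔ x ∈ H := by
    intro x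
    rw [← SetLike.mem_coe, ← hH]
    exact Iff.rfl.trans (by simp [Set.mem_image])
  have himg : ∀ a ∈ A, (a : ZMod 𝔭) ∈ H := fun a ha => (hmem_iff _).1 ⟨a, ha, rfl⟩
  -- iterate the strict period p
  have hiter : ∀ a ∈ A, ∀ k : ℕ, a + k * p ∈ A := by
    intro a ha k
    induction k with
    | zero => simpa using ha
    | succ k ih => simpa [Nat.succ_mul, ← Nat.add_assoc] using hpA _ ih
  -- iterate the eventual period 𝔭
  have hiter𝔭 : ∀ a ∈ A, m₀ ≤ a → ∀ k : ℕ, a + k * 𝔭 ∈ A := by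
    intro a ha hge k
    induction k with
    | zero => simpa using ha
    | succ k ih =>
      have : a + k * 𝔭 + 𝔭 ∈ A := hm₀ _ ih (by omega)
      simpa [Nat.succ_mul, ← Nat.add_assoc] using this
  -- arbitrarily large elements in each occurring class
  have F2 : ∀ a ∈ A, ∀ B : ℕ, ∃ b ∈ A, B ≤ b ∧ (b : ZMod 𝔭) = (a : ZMod 𝔭) := by
    intro a ha B
    refine ⟨a + (B * 𝔭) * p, hiter a ha (B * 𝔭), ?_, ?_⟩
    · have h1 : B * 1 * 1 ≤ B * 𝔭 * p := Nat.mul_le_mul (Nat.mul_le_mul le_rfl hpos) hp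
      omega
    · push_cast [ZMod.natCast_self]
      ring
  -- eventually every occurring class lies entirely in A
  have h4 : ∀ r : ZMod 𝔭, ∃ Nr : ℕ, r ∈ H → ∀ n, Nr ≤ n → (n : ZMod 𝔭) = r → n ∈ A := by
    intro r
    by_cases hr : r ∈ H
    · obtain ⟨a, ha, rfl⟩ := (hmem_iff r).2 hr
      obtain ⟨b, hb, hbge, hbeq⟩ := F2 a ha m₀
      refine ⟨b, fun _ n hn hneq => ?_⟩
      have hmod : b ≡ n [MOD 𝔭] :=
        ((ZMod.natCast_eq_natCast_iff _ _ _).1 (by rw [hneq, hbeq])).symm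
      obtain ⟨k, hk⟩ := (Nat.modEq_iff_dvd' hn).1 hmod
      rw [Nat.mul_comm] at hk
      have hkn : n = b + k * 𝔭 := by omega
      rw [hkn]; exact hiter𝔭 b hb hbge k
    · exact ⟨0, fun h => absurd h hr⟩
  choose f hf using h4
  obtain ⟨N, hN⟩ : ∃ N, ∀ n : ℕ, N ≤ n → ((n : ℕ) : ZMod 𝔭) ∈ H → n ∈ A :=
    ⟨Finset.univ.sup f, fun n hn hmem =>
      hf _ hmem n (le_trans (Finset.le_sup (Finset.mem_univ _)) hn) rfl⟩
  -- minimal positive q with class in H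
  set Q : Set ℕ := {k : ℕ | 0 < k ∧ ((k : ZMod 𝔭) ∈ H)} with hQdef
  have hq𝔭 : 𝔭 ∈ Q := ⟨hpos, by rw [ZMod.natCast_self]; exact H.zero_mem⟩
  have hqQ : sInf Q ∈ Q := Nat.sInf_mem ⟨𝔭, hq𝔭⟩
  have hqev : EvPeriodOf A (sInf Q) := by
    refine ⟨N, fun a ha hge => ?_⟩
    apply hN _ (by omega)
    push_cast
    exact H.add_mem (himg a ha) hqQ.2
  have hq_eq : sInf Q = 𝔭 :=
    le_antisymm (Nat.sInf_le hq𝔭) (hleast.2 ⟨hqQ.1, hqev⟩)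
  -- every element of A is divisible by 𝔭
  have hdvd : ∀ a ∈ A, 𝔭 ∣ a := by
    intro a ha
    rcases Nat.eq_zero_or_pos (a % 𝔭) with h0 | hrpos
    · exact Nat.dvd_of_mod_eq_zero h0
    · exfalso
      have hr : ((a % 𝔭 : ℕ) : ZMod 𝔭) ∈ H := by
        rw [ZMod.natCast_mod]; exact himg a ha
      have h1 : sInf Q ≤ a % 𝔭 := Nat.sInf_le ⟨hrpos, hr⟩
      have h2 := Nat.mod_lt a hpos
      omega
  -- every large multiple of 𝔭 is in A
  have hAll : ∀ n, N ≤ n → 𝔭 ∣ n → n ∈ A := by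
    intro n hn hd
    apply hN n hn
    obtain ⟨k, rfl⟩ := hd
    have : ((𝔭 * k : ℕ) : ZMod 𝔭) = 0 := by push_cast [ZMod.natCast_self]; ring
    rw [this]; exact H.zero_mem
  have hA_ne : A.Nonempty := by
    obtain ⟨a, ha, -⟩ := (hmem_iff 0).2 H.zero_mem; exact ⟨a, ha⟩
  have hmin : sInf A ∈ A := Nat.sInf_mem hA_ne
  constructor
  · -- gcd statement
    have h𝔭D : ∀ s ∈ ((fun a => a - sInf A) '' A), 𝔭 ∣ s := by
      rintro s ⟨a, ha, rfl⟩
      exact Nat.dvd_sub (hdvd a ha) (hdvd _ hmin)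
    have hub : ∀ d ∈ {d : ℕ | ∀ a ∈ ((fun a => a - sInf A) '' A), d ∣ a}, d ≤ 𝔭 := by
      intro d hd
      set t := max N (sInf A) with ht
      have htle : t + 1 ≤ 𝔭 * (t + 1) := Nat.le_mul_of_pos_left _ hpos
      have hn₁ : 𝔭 * (t + 1) ∈ A := hAll _ (by omega) ⟨t + 1, rfl⟩
      have hn₂ : 𝔭 * (t + 1) + 𝔭 ∈ A := hAll _ (by omega) ⟨t + 2, by ring⟩
      have hd₁ : d ∣ 𝔭 * (t + 1) - sInf A := hd _ ⟨_, hn₁, rfl⟩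
      have hd₂ : d ∣ 𝔭 * (t + 1) + 𝔭 - sInf A := hd _ ⟨_, hn₂, rfl⟩
      have hdiff : (𝔭 * (t + 1) + 𝔭 - sInf A) - (𝔭 * (t + 1) - sInf A) = 𝔭 := by omega
      have : d ∣ 𝔭 := hdiff ▸ Nat.dvd_sub hd₂ hd₁
      exact Nat.le_of_dvd hpos this
    rw [setGcd]
    exact le_antisymm (le_csSup ⟨𝔭, hub⟩ h𝔭D) (csSup_le ⟨𝔭, h𝔭D⟩ hub)
  · -- tail statement
    refine ⟨N + 1, fun m hm => ?_⟩
    ext x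
    simp only [Set.mem_setOf_eq, Set.mem_sep_iff]
    constructor
    · rintro ⟨hx, hge⟩
      obtain ⟨k, hk⟩ := hdvd x hx
      have hmk : m ≤ k := Nat.le_of_mul_le_mul_left (by omega) hpos
      exact ⟨k - m, by rw [hk, ← Nat.mul_add, Nat.add_sub_cancel' hmk]⟩
    · rintro ⟨n, rfl⟩
      have hle : m ≤ 𝔭 * m := Nat.le_mul_of_pos_left _ hpos
      exact ⟨hAll _ (by omega) ⟨m + n, (Nat.mul_add _ _ _).symm⟩, by omega⟩
end

section
/- Suppose A ⊆ ℕ contains a positive element and there exist integers r ≥ 0 and s ≥ 2 such that A ⊇ r + s ⋆ A (where s ⋆ A is the s-fold sumset of A). Then A is periodic, its minimal eventual period 𝔭 equals 𝔮 := gcd(A − min A), and there exists c such that A = (A ∩ [0, c)) ∪ (c + 𝔭·ℕ); in particular A is the union of a finite set with a single arithmetical progression. -/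
open Pointwise

/-- `n ⋆ B`: the `n`-fold sumset of `B`, with `0 ⋆ B = {0}`. -/
def nstar : ℕ → Set ℕ → Set ℕ
  | 0, _ => {0}
  | n + 1, B => B + nstar n B

/-- `A` is periodic. -/
def SetPeriodic (A : Set ℕ) : Prop := ∃ p > 0, ∀ a ∈ A, a + p ∈ A

lemma nstar_smul_mem {A : Set ℕ} {a : ℕ} (ha : a ∈ A) : ∀ n, n * a ∈ nstar n A
  | 0 => by simp [nstar]
  | n+1 => by
    have h := nstar_smul_mem ha n
    have h2 : a + n * a ∈ nstar (n+1) A := Set.add_mem_add ha h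
    have heq : (n+1) * a = a + n * a := by ring
    rw [heq]; exact h2

/-- The additive submonoid of (global) periods of `A`. -/
def periodsM (A : Set ℕ) : AddSubmonoid ℕ where
  carrier := {p | ∀ x ∈ A, x + p ∈ A}
  zero_mem' := by intro x hx; simpa using hx
  add_mem' := by
    intro p q hp hq x hx
    rw [← add_assoc]; exact hq _ (hp x hx)

lemma setGcd_spec {S : Set ℕ} (hS : ∃ n ∈ S, 0 < n) :
    (∀ a ∈ S, setGcd S ∣ a) ∧ 0 < setGcd S ∧
      ((setGcd S : ℤ) ∈ AddSubgroup.closure ((fun n : ℕ => (n : ℤ)) '' S)) := by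
  obtain ⟨n, hnS, hn⟩ := hS
  set H := AddSubgroup.closure ((fun n : ℕ => (n : ℤ)) '' S) with hH
  obtain ⟨g, hg⟩ := Int.subgroup_cyclic H
  have hmem : ∀ a ∈ S, (a : ℤ) ∈ H := fun a ha => AddSubgroup.subset_closure ⟨a, ha, rfl⟩
  have hgdvd : ∀ a ∈ S, g ∣ (a : ℤ) := by
    intro a ha
    have h := hmem a ha
    rw [hg, AddSubgroup.mem_closure_singleton] at h
    obtain ⟨k, hk⟩ := h
    have hk' : k * g = (a : ℤ) := by simpa using hk
    exact hk' ▸ dvd_mul_left g k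
  have hg0 : g ≠ 0 := by
    intro h0
    obtain ⟨k, hk⟩ := hgdvd n hnS
    rw [h0] at hk; simp at hk; omega
  set q0 := g.natAbs with hq0
  have hq0pos : 0 < q0 := Int.natAbs_pos.mpr hg0
  have hq0dvd : ∀ a ∈ S, q0 ∣ a := by
    intro a ha
    have : (q0 : ℤ) ∣ (a : ℤ) := (Int.natAbs_dvd).mpr (hgdvd a ha)
    exact_mod_cast this
  have hgH : g ∈ H := by
    rw [hg]; exact AddSubgroup.mem_closure_singleton_self g
  have hdg : ∀ d : ℕ, (∀ a ∈ S, d ∣ a) → d ∣ q0 := by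
    intro d hd
    have hdvdg : (d : ℤ) ∣ g := by
      refine AddSubgroup.closure_induction ?_ ?_ ?_ ?_ hgH
      · rintro x ⟨a, ha, rfl⟩; exact Int.natCast_dvd_natCast.mpr (hd a ha)
      · exact dvd_zero _
      · intro x y _ _ hx hy; exact dvd_add hx hy
      · intro x _ hx; exact dvd_neg.mpr hx
    have : (d : ℤ) ∣ (q0 : ℤ) := Int.dvd_natAbs.mpr hdvdg
    exact_mod_cast this
  have hgr : IsGreatest {d : ℕ | ∀ a ∈ S, d ∣ a} q0 := by
    constructor
    · exact hq0dvd
    · intro d hd; exact Nat.le_of_dvd hq0pos (hdg d hd)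
  have heq : setGcd S = q0 := hgr.csSup_eq
  refine ⟨by rw [heq]; exact hq0dvd, by rw [heq]; exact hq0pos, ?_⟩
  rw [heq]
  rcases Int.natAbs_eq g with h | h
  · rw [← h]; exact hgH
  · have : (q0 : ℤ) = -g := by omega
    rw [this]; exact neg_mem hgH

lemma semigroup_key (M : AddSubmonoid ℕ) (q : ℕ) (hq : 0 < q)
    (hcl : (q : ℤ) ∈ AddSubgroup.closure ((fun n : ℕ => (n : ℤ)) '' (M : Set ℕ)))
    (hdvd : ∀ p ∈ M, q ∣ p) :
    ∃ N : ℕ, ∀ n : ℕ, N ≤ n → q * n ∈ M := by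
  have hrep : ∃ u ∈ M, ∃ v ∈ M, (q : ℤ) = (u : ℤ) - (v : ℤ) := by
    refine AddSubgroup.closure_induction ?_ ?_ ?_ ?_ hcl
    · rintro x ⟨a, ha, rfl⟩
      exact ⟨a, ha, 0, zero_mem _, by simp⟩
    · exact ⟨0, zero_mem _, 0, zero_mem _, by simp⟩
    · rintro x y _ _ ⟨u, hu, v, hv, rfl⟩ ⟨u', hu', v', hv', rfl⟩
      exact ⟨u + u', add_mem hu hu', v + v', add_mem hv hv', by push_cast; ring⟩
    · rintro x _ ⟨u, hu, v, hv, rfl⟩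
      exact ⟨v, hv, u, hu, by ring⟩
  obtain ⟨u, hu, v, hv, huv⟩ := hrep
  have huq : u = q + v := by omega
  obtain ⟨w, hw⟩ := hdvd v hv
  by_cases hw0 : w = 0
  · subst hw0
    simp at hw
    subst hw
    have hu' : u = q := by omega
    subst hu'
    refine ⟨0, fun n _ => ?_⟩
    have := AddSubmonoid.nsmul_mem M hu n
    rwa [smul_eq_mul, mul_comm] at this
  · refine ⟨w * w, fun n hn => ?_⟩
    have hwpos : 0 < w := Nat.pos_of_ne_zero hw0
    set b := n % w with hb
    set d := n / w with hd
    have hbw : b < w := Nat.mod_lt _ hwpos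
    have hnd : n = w * d + b := by rw [hb, hd]; exact (Nat.div_add_mod n w).symm
    have hwd : w ≤ d := by
      by_contra hcon
      push_neg at hcon
      have h1 : w * d + w ≤ w * w := by
        calc w * d + w = w * (d + 1) := by ring
        _ ≤ w * w := Nat.mul_le_mul_left w (by omega)
      omega
    obtain ⟨e, he⟩ : ∃ e, d = b + e := ⟨d - b, by omega⟩
    have key : q * n = b * u + e * v := by
      rw [hnd, he, huq, hw]; ring
    rw [key]
    have h1 : b * u ∈ M := by
      have := AddSubmonoid.nsmul_mem M hu b
      rwa [smul_eq_mul] at this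
    have h2 : e * v ∈ M := by
      have := AddSubmonoid.nsmul_mem M hv e
      rwa [smul_eq_mul] at this
    exact add_mem h1 h2

theorem doubling_lemma (A : Set ℕ) (r s : ℕ)
    (hA : ∃ a ∈ A, 0 < a) (hs : 2 ≤ s)
    (hsup : ∀ x ∈ nstar s A, r + x ∈ A) :
    SetPeriodic A ∧
    IsLeast {p : ℕ | 0 < p ∧ EvPeriodOf A p} (setGcd ((fun a => a - sInf A) '' A)) ∧
    ∃ c : ℕ, A = (A ∩ Set.Iio c) ∪
      {x : ℕ | ∃ n : ℕ, x = c + setGcd ((fun a => a - sInf A) '' A) * n} := by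
  obtain ⟨a₀, ha₀, ha₀pos⟩ := hA
  obtain ⟨k, rfl⟩ : ∃ k, s = k + 2 := ⟨s - 2, by omega⟩
  -- every r + a + k*b with a, b ∈ A is a global period
  have hper : ∀ a ∈ A, ∀ b ∈ A, (r + a + k * b) ∈ periodsM A := by
    intro a ha b hb x hx
    have h1 : k * b ∈ nstar k A := nstar_smul_mem hb k
    have h2 : a + k * b ∈ nstar (k + 1) A := Set.add_mem_add ha h1
    have h3 : x + (a + k * b) ∈ nstar (k + 2) A := Set.add_mem_add hx h2
    have h4 := hsup _ h3
    have heq : x + (r + a + k * b) = r + (x + (a + k * b)) := by ring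
    rw [heq]; exact h4
  have hAne : A.Nonempty := ⟨a₀, ha₀⟩
  set m := sInf A with hm
  have hmA : m ∈ A := Nat.sInf_mem hAne
  have hle : ∀ a ∈ A, m ≤ a := fun a ha => Nat.sInf_le ha
  set p₀ := r + a₀ + k * a₀ with hp₀def
  have hp₀pos : 0 < p₀ := by omega
  have hp₀ : p₀ ∈ periodsM A := hper a₀ ha₀ a₀ ha₀
  have hS : ∃ n ∈ (fun a => a - m) '' A, 0 < n := by
    refine ⟨m + p₀ - m, ⟨m + p₀, hp₀ m hmA, rfl⟩, by omega⟩
  obtain ⟨hqdvd, hqpos, hqcl⟩ := setGcd_spec hS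
  set q := setGcd ((fun a => a - m) '' A) with hqdef
  have hqd : ∀ a ∈ A, q ∣ a - m := fun a ha => hqdvd _ ⟨a, ha, rfl⟩
  -- q is in the subgroup generated by periods
  have hsub : AddSubgroup.closure ((fun n : ℕ => (n : ℤ)) '' ((fun a => a - m) '' A)) ≤
      AddSubgroup.closure ((fun n : ℕ => (n : ℤ)) '' ((periodsM A : Set ℕ))) := by
    rw [AddSubgroup.closure_le]
    rintro _ ⟨_, ⟨a, ha, rfl⟩, rfl⟩
    have hmem1 : ((r + a + k * m : ℕ) : ℤ) ∈
        AddSubgroup.closure ((fun n : ℕ => (n : ℤ)) '' ((periodsM A : Set ℕ))) :=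
      AddSubgroup.subset_closure ⟨_, hper a ha m hmA, rfl⟩
    have hmem2 : ((r + m + k * m : ℕ) : ℤ) ∈
        AddSubgroup.closure ((fun n : ℕ => (n : ℤ)) '' ((periodsM A : Set ℕ))) :=
      AddSubgroup.subset_closure ⟨_, hper m hmA m hmA, rfl⟩
    have heq : (((a - m : ℕ) : ℤ)) = ((r + a + k * m : ℕ) : ℤ) - ((r + m + k * m : ℕ) : ℤ) := by
      have := hle a ha
      push_cast [this]
      ring
    show (((a - m : ℕ) : ℤ)) ∈ _
    rw [heq]
    exact sub_mem hmem1 hmem2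
  have hcl2 : (q : ℤ) ∈
      AddSubgroup.closure ((fun n : ℕ => (n : ℤ)) '' ((periodsM A : Set ℕ))) := hsub hqcl
  have hdvdP : ∀ p ∈ periodsM A, q ∣ p := by
    intro p hp
    have h1 : m + p ∈ A := hp m hmA
    have h2 := hqd _ h1
    rwa [Nat.add_sub_cancel_left] at h2
  obtain ⟨N, hN⟩ := semigroup_key (periodsM A) q hqpos hcl2 hdvdP
  refine ⟨⟨p₀, hp₀pos, fun a ha => hp₀ a ha⟩, ⟨⟨hqpos, m + q * N, ?_⟩, ?_⟩, ⟨m + q * N, ?_⟩⟩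
  · -- q is an eventual period with threshold m + q*N
    intro a ha hca
    obtain ⟨j, hj⟩ := hqd a ha
    have ham : m ≤ a := hle a ha
    have haj : a = m + q * j := by omega
    have hjN : N ≤ j := Nat.le_of_mul_le_mul_left (by omega) hqpos
    have hP : q * (j + 1) ∈ periodsM A := hN _ (by omega)
    have hmem : m + q * (j + 1) ∈ A := hP m hmA
    have heq : a + q = m + q * (j + 1) := by rw [haj]; ring
    rw [heq]; exact hmem
  · -- lower bound
    rintro p ⟨hppos, m', hm'⟩
    have hx1 : q * (N + m') ∈ periodsM A := hN _ (by omega)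
    have hxA : m + q * (N + m') ∈ A := hx1 m hmA
    have hxm : m' ≤ m + q * (N + m') := by
      have h1 : 1 * (N + m') ≤ q * (N + m') := Nat.mul_le_mul_right _ hqpos
      omega
    have hxp : m + q * (N + m') + p ∈ A := hm' _ hxA hxm
    obtain ⟨j, hj⟩ := hqd _ hxp
    have hdp : q ∣ p := by
      have h3 : q * (N + m') + p = q * j := by omega
      exact (Nat.dvd_add_right (dvd_mul_right q (N + m'))).mp ⟨j, h3⟩
    exact Nat.le_of_dvd hppos hdp
  · -- structure of A
    ext x
    constructor
    · intro hxA
      by_cases hxc : x < m + q * N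
      · exact Or.inl ⟨hxA, hxc⟩
      · right
        obtain ⟨j, hj⟩ := hqd x hxA
        have hxm := hle x hxA
        have hxj : x = m + q * j := by omega
        have hjN : N ≤ j := Nat.le_of_mul_le_mul_left (by omega) hqpos
        obtain ⟨e, rfl⟩ : ∃ e, j = N + e := ⟨j - N, by omega⟩
        exact ⟨e, by rw [hxj]; ring⟩
    · rintro (⟨h, _⟩ | ⟨n, rfl⟩)
      · exact h
      · have hP : q * (N + n) ∈ periodsM A := hN _ (by omega)
        have hmem : m + q * (N + n) ∈ A := hP m hmA
        have heq : m + q * N + q * n = m + q * (N + n) := by ring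
        rw [heq]; exact hmem
end

section
/- Let Γ : (𝒫(ℕ))^k → (𝒫(ℕ))^k be of the form Γᵢ(Y) = ⋃_{u} (Γ_{i,u} + u ⋆ Y) with each Γ_{i,u} ⊆ ℕ, mapping k-tuples of subsets of the positive integers into k-tuples of subsets of the positive integers (equivalently 0 ∉ Γ_{i,0} for all i). Then for the increasing sequence Γ⁽ⁿ⁾(∅,…,∅), the i-th component Γᵢ⁽ⁿ⁾(∅,…,∅) is empty for some (equivalently all) n ≥ k if and only if it is empty for n = k; i.e., the set of indices i with empty i-th component stabilizes by step k. -/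
open Pointwise

/-- The set-operator `Γ` determined by the family of coefficient sets `G i u`:
`Γᵢ(Y) = ⋃_{u ∈ ℕᵏ} (G i u + u₁ ⋆ Y₁ + ⋯ + u_k ⋆ Y_k)`. -/
def GammaOp {k : ℕ} (G : Fin k → (Fin k → ℕ) → Set ℕ)
    (Y : Fin k → Set ℕ) : Fin k → Set ℕ :=
  fun i => ⋃ u : Fin k → ℕ, (G i u + ∑ j : Fin k, nstar (u j) (Y j))

lemma nstar_nonempty_of {n : ℕ} {B : Set ℕ} (hB : B.Nonempty) : (nstar n B).Nonempty := by
  induction n with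
  | zero => exact ⟨0, rfl⟩
  | succ n ih => exact hB.add ih

lemma nonempty_of_nstar {n : ℕ} {B : Set ℕ} (h : (nstar (n + 1) B).Nonempty) : B.Nonempty := by
  rw [nstar, Set.add_nonempty] at h
  exact h.1

lemma finsum_sets_nonempty_iff {ι : Type*} (s : Finset ι) (f : ι → Set ℕ) :
    (∑ j ∈ s, f j).Nonempty ↔ ∀ j ∈ s, (f j).Nonempty := by
  classical
  induction s using Finset.cons_induction with
  | empty => simp
  | cons a s ha ih =>
    rw [Finset.sum_cons, Set.add_nonempty, ih]
    simp [ha]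

lemma gamma_nonempty_mono {k : ℕ} (G : Fin k → (Fin k → ℕ) → Set ℕ)
    {Y Y' : Fin k → Set ℕ} (h : ∀ j, (Y j).Nonempty → (Y' j).Nonempty) (i : Fin k)
    (hne : (GammaOp G Y i).Nonempty) : (GammaOp G Y' i).Nonempty := by
  obtain ⟨x, hx⟩ := hne
  simp only [GammaOp, Set.mem_iUnion] at hx
  obtain ⟨u, hu⟩ := hx
  have h2 : (G i u + ∑ j : Fin k, nstar (u j) (Y j)).Nonempty := ⟨x, hu⟩
  rw [Set.add_nonempty, finsum_sets_nonempty_iff] at h2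
  obtain ⟨hG, hsum⟩ := h2
  have h3 : (G i u + ∑ j : Fin k, nstar (u j) (Y' j)).Nonempty := by
    rw [Set.add_nonempty, finsum_sets_nonempty_iff]
    refine ⟨hG, fun j hj => ?_⟩
    rcases Nat.eq_zero_or_pos (u j) with h0 | h0
    · rw [h0]; exact ⟨0, rfl⟩
    · obtain ⟨m, hm⟩ : ∃ m, u j = m + 1 := ⟨u j - 1, by omega⟩
      have := hsum j hj
      rw [hm] at this ⊢
      exact nstar_nonempty_of (h j (nonempty_of_nstar this))
  obtain ⟨y, hy⟩ := h3
  exact ⟨y, Set.mem_iUnion.2 ⟨u, hy⟩⟩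

/-- The empty components of the iterates `Γ⁽ⁿ⁾(∅,…,∅)` stabilize by step `k`,
assuming `Γ` maps tuples of subsets of `ℙ` to tuples of subsets of `ℙ`
(equivalently `0 ∉ G i 0`). -/
theorem empty_components_stabilize (k : ℕ) (G : Fin k → (Fin k → ℕ) → Set ℕ)
    (h0 : ∀ i, 0 ∉ G i (fun _ => 0)) :
    ∀ n, k ≤ n → ∀ i : Fin k,
      ((GammaOp G)^[n] (fun _ => (∅ : Set ℕ)) i = ∅ ↔
        (GammaOp G)^[k] (fun _ => (∅ : Set ℕ)) i = ∅) := by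
  classical
  set it : ℕ → Fin k → Set ℕ := fun n => (GammaOp G)^[n] (fun _ => (∅ : Set ℕ)) with hit
  have hstep : ∀ n, it (n + 1) = GammaOp G (it n) := by
    intro n
    simp [hit, Function.iterate_succ_apply']
  -- monotonicity of nonemptiness pattern
  have hmono : ∀ n i, (it n i).Nonempty → (it (n + 1) i).Nonempty := by
    intro n
    induction n with
    | zero => intro i h; exact absurd h (by simp [hit])
    | succ n ih =>
      intro i h
      rw [hstep (n + 1)]
      rw [hstep n] at h
      exact gamma_nonempty_mono G ih i h
  -- once the pattern repeats, it stays fixed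
  have hfix : ∀ m, (∀ i, (it m i).Nonempty ↔ (it (m + 1) i).Nonempty) →
      ∀ n, m ≤ n → ∀ i, ((it n i).Nonempty ↔ (it m i).Nonempty) := by
    intro m hm n hn
    induction n with
    | zero =>
      intro i
      have : m = 0 := Nat.le_zero.mp hn
      rw [this]
    | succ n ih =>
      rcases Nat.lt_or_ge m (n + 1) with h | h
      · have hn' : m ≤ n := Nat.lt_succ_iff.mp h
        have ihn := ih hn'
        intro i
        constructor
        · intro hne
          rw [hstep n] at hne
          have := gamma_nonempty_mono G (fun j => (ihn j).1) i hne
          rw [← hstep m] at this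
          exact (hm i).2 this
        · intro hne
          have := (hm i).1 hne
          rw [hstep m] at this
          have := gamma_nonempty_mono G (fun j => (ihn j).2) i this
          rw [← hstep n] at this
          exact this
      · have : m = n + 1 := le_antisymm hn h
        rw [this]
        intro i; rfl
  -- the pattern as a finset
  set T : ℕ → Finset (Fin k) := fun n => Finset.univ.filter (fun i => (it n i).Nonempty)
    with hT
  have hTmono : ∀ n, T n ⊆ T (n + 1) := by
    intro n i hi
    simp only [hT, Finset.mem_filter] at hi ⊢
    exact ⟨hi.1, hmono n i hi.2⟩
  -- pigeonhole: some m ≤ k has T m = T (m+1)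
  have hex : ∃ m ≤ k, T m = T (m + 1) := by
    by_contra hc
    push_neg at hc
    have hcard : ∀ m, m ≤ k + 1 → m ≤ (T m).card := by
      intro m
      induction m with
      | zero => intro _; exact Nat.zero_le _
      | succ m ih =>
        intro hm
        have h1 := ih (Nat.le_of_succ_le hm)
        have hne : T m ≠ T (m + 1) := hc m (Nat.lt_succ_iff.mp hm)
        have : (T m).card < (T (m + 1)).card :=
          Finset.card_lt_card (lt_of_le_of_ne (hTmono m) hne)
        omega
    have := hcard (k + 1) le_rfl
    have hle : (T (k + 1)).card ≤ k := by
      have := Finset.card_filter_le (Finset.univ : Finset (Fin k)) (fun i => (it (k + 1) i).Nonempty)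
      simpa using this
    omega
  obtain ⟨m, hmk, hTm⟩ := hex
  have hpat : ∀ i, (it m i).Nonempty ↔ (it (m + 1) i).Nonempty := by
    intro i
    constructor
    · intro h
      have : i ∈ T m := Finset.mem_filter.2 ⟨Finset.mem_univ i, h⟩
      rw [hTm] at this
      simp only [hT, Finset.mem_filter] at this
      exact this.2
    · intro h
      have : i ∈ T (m + 1) := Finset.mem_filter.2 ⟨Finset.mem_univ i, h⟩
      rw [← hTm] at this
      simp only [hT, Finset.mem_filter] at this
      exact this.2
  intro n hn i
  have h1 := hfix m hpat n (le_trans hmk hn) i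
  have h2 := hfix m hpat k hmk i
  rw [← Set.not_nonempty_iff_eq_empty, ← Set.not_nonempty_iff_eq_empty]
  rw [h1, h2]
end

section
/- Let Γ ∈ Γ𝖣𝗈𝗆₀ (a monotone set-operator of the form Γᵢ(Y) = ⋃_u Γ_{i,u} + u ⋆ Y preserving tuples of subsets of positive integers), and let A ≤ Γ(A) componentwise with each Aᵢ ⊆ ℙ. Then the componentwise minimum of ⋃_{n≥0} Γ⁽ⁿ⁾(A) equals the componentwise minimum of Γ⁽ᵏ⁾(A), where k is the number of components (minimum of ∅ taken as +∞). -/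
open Pointwise

/-- Minimum of a set of naturals, taken in `ℕ∞` so that `min ∅ = ∞`. -/
noncomputable def minW (S : Set ℕ) : ℕ∞ := sInf ((fun n : ℕ => (n : ℕ∞)) '' S)

namespace MinStabAux

lemma enat_sInf_mem {S : Set ℕ∞} (h : S.Nonempty) : sInf S ∈ S := by
  rcases eq_top_or_lt_top (sInf S) with h1 | h1
  · obtain ⟨x, hx⟩ := h
    have hx2 : x = ⊤ := top_unique (h1 ▸ sInf_le hx)
    rwa [h1, ← hx2]
  · have h2 : sInf S < sInf S + 1 := (ENat.lt_add_one_iff h1.ne).mpr le_rfl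
    obtain ⟨a, ha, hlt⟩ := sInf_lt_iff.mp h2
    have h3 : a ≤ sInf S := (ENat.lt_add_one_iff h1.ne).mp hlt
    have h4 : a = sInf S := le_antisymm h3 (sInf_le ha)
    rwa [← h4]

lemma enat_exists_iInf {ι : Sort*} [Nonempty ι] (f : ι → ℕ∞) : ∃ a, f a = ⨅ b, f b := by
  have h := enat_sInf_mem (Set.range_nonempty f)
  rw [sInf_range] at h
  exact Set.mem_range.mp h

lemma minW_mono {S T : Set ℕ} (h : S ⊆ T) : minW T ≤ minW S :=
  sInf_le_sInf (Set.image_mono h)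

lemma minW_empty : minW ∅ = ⊤ := by simp [minW]

lemma minW_le {S : Set ℕ} {a : ℕ} (h : a ∈ S) : minW S ≤ (a : ℕ∞) :=
  sInf_le ⟨a, h, rfl⟩

lemma le_minW {S : Set ℕ} {c : ℕ∞} (h : ∀ a ∈ S, c ≤ (a : ℕ∞)) : c ≤ minW S :=
  le_sInf (by rintro x ⟨a, ha, rfl⟩; exact h a ha)

lemma exists_minW {S : Set ℕ} (h : S.Nonempty) : ∃ a ∈ S, minW S = (a : ℕ∞) := by
  obtain ⟨x, hx, he⟩ := enat_sInf_mem (h.image (fun n : ℕ => (n : ℕ∞)))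
  exact ⟨x, hx, he.symm⟩

lemma minW_add (S T : Set ℕ) : minW (S + T) = minW S + minW T := by
  rcases S.eq_empty_or_nonempty with rfl | hS
  · simp [Set.empty_add, minW_empty]
  rcases T.eq_empty_or_nonempty with rfl | hT
  · simp [Set.add_empty, minW_empty]
  obtain ⟨a, ha, hA⟩ := exists_minW hS
  obtain ⟨b, hb, hB⟩ := exists_minW hT
  apply le_antisymm
  · rw [hA, hB, ← Nat.cast_add]
    exact minW_le (Set.add_mem_add ha hb)
  · apply le_minW
    intro x hx
    obtain ⟨s, hs, t, ht, rfl⟩ := Set.mem_add.mp hx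
    rw [hA, hB]
    push_cast
    exact add_le_add (hA ▸ minW_le hs) (hB ▸ minW_le ht)

lemma minW_zero : minW 0 = 0 := by
  show minW {0} = 0
  simp [minW]

noncomputable def minWHom : Set ℕ →+ ℕ∞ where
  toFun := minW
  map_zero' := minW_zero
  map_add' := minW_add

lemma minW_sum {ι : Type*} (s : Finset ι) (f : ι → Set ℕ) :
    minW (∑ j ∈ s, f j) = ∑ j ∈ s, minW (f j) :=
  map_sum minWHom f s

lemma minW_nstar (n : ℕ) (B : Set ℕ) : minW (nstar n B) = (n : ℕ∞) * minW B := by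
  induction n with
  | zero =>
    show minW {0} = 0 * minW B
    simp [minW]
  | succ n ih =>
    show minW (B + nstar n B) = _
    rw [minW_add, ih]
    push_cast
    ring

lemma minW_iUnion {ι : Sort*} (f : ι → Set ℕ) : minW (⋃ u, f u) = ⨅ u, minW (f u) := by
  apply le_antisymm
  · exact le_iInf fun u => minW_mono (Set.subset_iUnion f u)
  · apply le_sInf
    rintro x ⟨a, ha, rfl⟩
    rw [Set.mem_iUnion] at ha
    obtain ⟨u, hu⟩ := ha
    exact (iInf_le _ u).trans (minW_le hu)

lemma minW_Gamma {k : ℕ} (G : Fin k → (Fin k → ℕ) → Set ℕ) (Y : Fin k → Set ℕ) (i : Fin k) :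
    minW (GammaOp G Y i) =
      ⨅ u : Fin k → ℕ, (minW (G i u) + ∑ j : Fin k, (u j : ℕ∞) * minW (Y j)) := by
  show minW (⋃ u : Fin k → ℕ, (G i u + ∑ j : Fin k, nstar (u j) (Y j))) = _
  rw [minW_iUnion]
  congr 1
  funext u
  rw [minW_add, minW_sum]
  congr 1
  exact Finset.sum_congr rfl fun j _ => minW_nstar _ _

/-- Abstract stabilization lemma (Bellman–Ford style). -/
theorem key (k : ℕ) (c : Fin k → (Fin k → ℕ) → ℕ∞) (m : ℕ → Fin k → ℕ∞)
    (hrec : ∀ n i, m (n + 1) i = ⨅ u : Fin k → ℕ, (c i u + ∑ j : Fin k, (u j : ℕ∞) * m n j))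
    (hdec1 : ∀ i, m 1 i ≤ m 0 i) :
    ∀ i, m k i = ⨅ n, m n i := by
  -- the sequence is componentwise nonincreasing
  have hdec : ∀ n, ∀ i, m (n + 1) i ≤ m n i := by
    intro n
    induction n with
    | zero => exact hdec1
    | succ n ih =>
      intro i
      rw [hrec, hrec]
      exact iInf_mono fun u => add_le_add_right
        (Finset.sum_le_sum fun j _ => mul_le_mul_right (ih j) _) _
  have hmono : ∀ {a b : ℕ}, a ≤ b → ∀ i, m b i ≤ m a i := by
    intro a b hab i
    have hanti : Antitone (fun n => m n i) := antitone_nat_of_succ_le (fun n => hdec n i)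
    exact hanti hab
  set μ : Fin k → ℕ∞ := fun i => ⨅ n, m n i with hμdef
  have hμle : ∀ n i, μ i ≤ m n i := fun n i => iInf_le _ n
  -- the infimum is attained uniformly at some time N
  have hNi : ∀ i, ∃ N, m N i = μ i := fun i => enat_exists_iInf fun n => m n i
  choose Ni hNispec using hNi
  set N : ℕ := Finset.univ.sup Ni with hNdef
  have hN : ∀ i, m N i = μ i := by
    intro i
    exact le_antisymm ((hmono (Finset.le_sup (Finset.mem_univ i)) i).trans_eq (hNispec i))
      (hμle N i)
  -- μ is a "super-fixed-point"
  have hμrec : ∀ (u : Fin k → ℕ) (i : Fin k),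
      μ i ≤ c i u + ∑ j : Fin k, (u j : ℕ∞) * μ j := by
    intro u i
    calc μ i ≤ m (N + 1) i := hμle _ _
      _ ≤ c i u + ∑ j : Fin k, (u j : ℕ∞) * m N j := by rw [hrec]; exact iInf_le _ u
      _ = c i u + ∑ j : Fin k, (u j : ℕ∞) * μ j := by
          congr 1
          exact Finset.sum_congr rfl fun j _ => by rw [hN j]
  have hconvmono : ∀ {a b : ℕ} (i : Fin k), a ≤ b → m a i = μ i → m b i = μ i := by
    intro a b i hab h
    exact le_antisymm ((hmono hab i).trans h.le) (hμle b i)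
  -- first convergence time
  set τ : Fin k → ℕ := fun i => sInf {t | m t i = μ i} with hτdef
  have hτ : ∀ i, m (τ i) i = μ i := by
    intro i
    have hne : {t | m t i = μ i}.Nonempty := ⟨N, hN i⟩
    exact Nat.sInf_mem hne
  -- growth lemma: as long as not everything converged, something new converges
  have grow : ∀ n : ℕ, (∃ i, m n i ≠ μ i) → ∃ i, m n i ≠ μ i ∧ m (n + 1) i = μ i := by
    intro n hne
    set S : Finset (Fin k) := Finset.univ.filter (fun i => m n i ≠ μ i) with hSdef
    have hSne : S.Nonempty := by
      obtain ⟨i, hi⟩ := hne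
      exact ⟨i, Finset.mem_filter.mpr ⟨Finset.mem_univ i, hi⟩⟩
    obtain ⟨i, hiS, hmin⟩ := S.exists_min_image τ hSne
    have hi : m n i ≠ μ i := (Finset.mem_filter.mp hiS).2
    refine ⟨i, hi, ?_⟩
    have hμitop : μ i ≠ ⊤ := by
      intro h
      apply hi
      have h2 : m n i = ⊤ := iInf_eq_top.mp h n
      rw [h2, h]
    have ht1 : n + 1 ≤ τ i := by
      by_contra hcon
      push_neg at hcon
      exact hi (le_antisymm ((hmono (Nat.lt_succ_iff.mp hcon) i).trans_eq (hτ i)) (hμle n i))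
    obtain ⟨s, hs⟩ : ∃ s, τ i = s + 1 := ⟨τ i - 1, by omega⟩
    obtain ⟨u', hu'⟩ := enat_exists_iInf
      (fun u : Fin k → ℕ => c i u + ∑ j : Fin k, (u j : ℕ∞) * m s j)
    have heq : c i u' + ∑ j : Fin k, (u' j : ℕ∞) * m s j = μ i := by
      rw [hu', ← hrec s i, ← hs]
      exact hτ i
    -- on the support of u', time-s values already equal μ
    have hsupp : ∀ j, u' j ≠ 0 → m s j = μ j := by
      intro j hj
      by_contra hne2
      have hlt : μ j < m s j := lt_of_le_of_ne (hμle s j) (Ne.symm hne2)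
      have hterm : (u' j : ℕ∞) * m s j ≤ μ i :=
        le_of_le_of_eq ((Finset.single_le_sum
          (f := fun j' : Fin k => (u' j' : ℕ∞) * m s j') (fun _ _ => zero_le)
          (Finset.mem_univ j)).trans le_add_self) heq
      have hmsj : m s j ≠ ⊤ := by
        intro htop
        rw [htop, ENat.mul_top (m := (u' j : ℕ∞)) (by exact_mod_cast hj)] at hterm
        exact hμitop (top_unique hterm)
      have h1 : μ j + 1 ≤ m s j := Order.add_one_le_of_lt hlt
      have e1 : (u' j : ℕ∞) * μ j + 1 ≤ (u' j : ℕ∞) * m s j := by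
        calc (u' j : ℕ∞) * μ j + 1 ≤ (u' j : ℕ∞) * μ j + (u' j : ℕ∞) := by
              exact add_le_add_right (by exact_mod_cast Nat.one_le_iff_ne_zero.mpr hj) _
          _ = (u' j : ℕ∞) * (μ j + 1) := by ring
          _ ≤ _ := mul_le_mul_right h1 _
      have hsum : (∑ j' : Fin k, (u' j' : ℕ∞) * μ j') + 1 ≤
          ∑ j' : Fin k, (u' j' : ℕ∞) * m s j' := by
        rw [← Finset.add_sum_erase _ (fun j' : Fin k => (u' j' : ℕ∞) * m s j')
            (Finset.mem_univ j),
          ← Finset.add_sum_erase _ (fun j' : Fin k => (u' j' : ℕ∞) * μ j')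
            (Finset.mem_univ j), add_right_comm]
        exact add_le_add e1 (Finset.sum_le_sum fun j' _ => mul_le_mul_right (hμle s j') _)
      have hcontra : μ i + 1 ≤ μ i := by
        calc μ i + 1 ≤ (c i u' + ∑ j' : Fin k, (u' j' : ℕ∞) * μ j') + 1 :=
              add_le_add_left (hμrec u' i) 1
          _ = c i u' + ((∑ j' : Fin k, (u' j' : ℕ∞) * μ j') + 1) := by rw [add_assoc]
          _ ≤ c i u' + ∑ j' : Fin k, (u' j' : ℕ∞) * m s j' := add_le_add_right hsum _
          _ = μ i := heq
      exact absurd (lt_of_lt_of_le ((ENat.lt_add_one_iff hμitop).mpr le_rfl) hcontra)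
        (lt_irrefl _)
    -- support components already converged at time n
    have hτj : ∀ j, u' j ≠ 0 → m n j = μ j := by
      intro j hj
      by_contra hne2
      have hjS : j ∈ S := Finset.mem_filter.mpr ⟨Finset.mem_univ j, hne2⟩
      have h1 : τ i ≤ τ j := hmin j hjS
      have h2 : τ j ≤ s := Nat.sInf_le (hsupp j hj)
      omega
    have hfin : m (n + 1) i ≤ μ i := by
      rw [hrec]
      refine (iInf_le _ u').trans ?_
      rw [← heq]
      apply add_le_add_right
      apply le_of_eq
      apply Finset.sum_congr rfl
      intro j _
      rcases eq_or_ne (u' j) 0 with h0 | h0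
      · simp [h0]
      · rw [hτj j h0, hsupp j h0]
    exact le_antisymm hfin (hμle _ i)
  -- counting argument
  have hcount : ∀ n : ℕ,
      n ≤ (Finset.univ.filter (fun i : Fin k => m n i = μ i)).card ∨ ∀ i, m n i = μ i := by
    intro n
    induction n with
    | zero => exact Or.inl (Nat.zero_le _)
    | succ n ih =>
      by_cases hall : ∀ i, m (n + 1) i = μ i
      · exact Or.inr hall
      rcases ih with hc | hall0
      · left
        push_neg at hall
        obtain ⟨i0, hi0⟩ := hall
        have hne : ∃ i, m n i ≠ μ i :=
          ⟨i0, fun h => hi0 (hconvmono i0 (Nat.le_succ n) h)⟩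
        obtain ⟨i, hi, hi2⟩ := grow n hne
        have hss : Finset.univ.filter (fun i : Fin k => m n i = μ i) ⊂
            Finset.univ.filter (fun i : Fin k => m (n + 1) i = μ i) := by
          refine Finset.ssubset_iff_of_subset (fun j hj => Finset.mem_filter.mpr
            ⟨Finset.mem_univ j, hconvmono j (Nat.le_succ n) (Finset.mem_filter.mp hj).2⟩)
            |>.mpr ?_
          exact ⟨i, Finset.mem_filter.mpr ⟨Finset.mem_univ i, hi2⟩,
            fun h => hi (Finset.mem_filter.mp h).2⟩
        have := Finset.card_lt_card hss
        omega
      · exact Or.inr fun i => hconvmono i (Nat.le_succ n) (hall0 i)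
  intro i
  rcases hcount k with hc | hall
  · have hle : (Finset.univ.filter (fun i : Fin k => m k i = μ i)).card ≤ k := by
      have := Finset.card_filter_le (Finset.univ : Finset (Fin k))
        (fun i : Fin k => m k i = μ i)
      simpa using this
    have hcard : (Finset.univ.filter (fun i : Fin k => m k i = μ i)).card =
        Fintype.card (Fin k) := by
      simp only [Fintype.card_fin]
      omega
    have huniv := Finset.eq_univ_of_card _ hcard
    have hmem : i ∈ Finset.univ.filter (fun i : Fin k => m k i = μ i) := by
      rw [huniv]; exact Finset.mem_univ i
    exact (Finset.mem_filter.mp hmem).2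
  · exact hall i

end MinStabAux

theorem min_stabilizes (k : ℕ) (G : Fin k → (Fin k → ℕ) → Set ℕ)
    (h0 : ∀ i, 0 ∉ G i (fun _ => 0))
    (A : Fin k → Set ℕ) (hApos : ∀ i, ∀ a ∈ A i, 0 < a)
    (hA : ∀ i, A i ⊆ GammaOp G A i) :
    ∀ i : Fin k,
      minW (⋃ n : ℕ, (GammaOp G)^[n] A i) = minW ((GammaOp G)^[k] A i) := by
  intro i
  set m : ℕ → Fin k → ℕ∞ := fun n j => minW ((GammaOp G)^[n] A j) with hmdef
  have hrec : ∀ n j, m (n + 1) j =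
      ⨅ u : Fin k → ℕ, (minW (G j u) + ∑ l : Fin k, (u l : ℕ∞) * m n l) := by
    intro n j
    show minW ((GammaOp G)^[n + 1] A j) = _
    rw [Function.iterate_succ_apply']
    exact MinStabAux.minW_Gamma G ((GammaOp G)^[n] A) j
  have hdec1 : ∀ j, m 1 j ≤ m 0 j := by
    intro j
    show minW ((GammaOp G)^[1] A j) ≤ minW ((GammaOp G)^[0] A j)
    simp only [Function.iterate_one, Function.iterate_zero, id_eq]
    exact MinStabAux.minW_mono (hA j)
  have hkey := MinStabAux.key k (fun j u => minW (G j u)) m hrec hdec1 i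
  rw [MinStabAux.minW_iUnion (fun n => (GammaOp G)^[n] A i)]
  exact hkey.symm
end
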